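/- arXiv:2210.13262 — 3 statements merged into one kernel-verified Lean document; each statement's English description precedes it below -/
import Mathlib

section
/- Let R be a commutative ℚ-algebra, n a finite type, and M an n×n matrix over R. Then in R[[t]] one has exp(Σ_{m≥1} (trace(M^m)/m)·t^m) · det(1 − t·M) = 1, where M is regarded as a matrix over R[[t]] via the constant-coefficient embedding; that is, the exponential expression of the zeta function coincides with the Hashimoto expression 1/det(1 − t·M). -/
open PowerSeries Matrix Finset

noncomputable section

variable {V A R : Type*}

/-- Exponential of a formal power series over a ℚ-algebra (intended for series with zero
constant term): `exp f = ∑ₖ f^k / k!`; the coefficient of degree `n` only receives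
contributions from `k ≤ n` when the constant term of `f` vanishes. -/
def pexp [CommRing R] [Algebra ℚ R] (f : PowerSeries R) : PowerSeries R :=
  PowerSeries.mk fun n => ∑ k ∈ Finset.range (n + 1),
    ((Nat.factorial k : ℚ))⁻¹ • (PowerSeries.coeff (R := R) n (f ^ k))

/-- The generalized weight matrix `M(a,a') = τ(a')·δ_{𝔥a,𝔱a'} − υ(a')·δ_{a⁻¹,a'}`. -/
def genWeight [CommRing R] [DecidableEq V] [DecidableEq A]
    (tl hd : A → V) (inv : A → Option A) (τ υ : A → R) : Matrix A A R :=
  fun a a' => τ a' * (if hd a = tl a' then 1 else 0) -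
    (if inv a = some a' then υ a' else 0)

/-- The matrix `J(a,a') = υ(a')·δ_{a⁻¹,a'}`. -/
def invJ [CommRing R] [DecidableEq A] (inv : A → Option A) (υ : A → R) :
    Matrix A A R :=
  fun a a' => if inv a = some a' then υ a' else 0

/-- `c_a(t)`: `1 + υ(a)t` for loops, `1 − υ(a)υ(a⁻¹)t²` for non-loop arcs with inverse,
`1` for arcs with no inverse. -/
def cFac [CommRing R] [DecidableEq V] (tl hd : A → V) (inv : A → Option A)
    (υ : A → R) (a : A) : PowerSeries R :=
  if tl a = hd a then 1 + PowerSeries.C (R := R) (υ a) * X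
  else
    match inv a with
    | some b => 1 - PowerSeries.C (R := R) (υ a * υ b) * X ^ 2
    | none => 1

/-- The weighted adjacency matrix `A_Δ`. -/
def adjMat [CommRing R] [Fintype A] [DecidableEq V] (tl hd : A → V)
    (inv : A → Option A) (τ υ : A → R) : Matrix V V (PowerSeries R) :=
  fun u v => ∑ a : A, if tl a = u ∧ hd a = v then
    PowerSeries.C (R := R) (τ a) * Ring.inverse (cFac tl hd inv υ a) else 0

/-- The weighted backtrack matrix `B_Δ`. -/
def backMat [CommRing R] [Fintype A] [DecidableEq V] (tl hd : A → V)
    (inv : A → Option A) (τ υ : A → R) : Matrix V V (PowerSeries R) :=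
  fun u v => if u = v then
    ∑ a : A, (if tl a = u ∧ tl a ≠ hd a then
      (match inv a with
       | some b => PowerSeries.C (R := R) (τ a * υ b) * Ring.inverse (cFac tl hd inv υ a)
       | none => 0)
      else 0)
  else 0

/-- The sum `N_m` of the circular products over all closed paths of length `m`. -/
def circSum [CommRing R] [Fintype A] [DecidableEq A] [DecidableEq V]
    (tl hd : A → V) (M : Matrix A A R) (m : ℕ) [NeZero m] : R :=
  ∑ f ∈ Finset.univ.filter (fun f : ZMod m → A => ∀ i, hd (f i) = tl (f (i + 1))),
    ∏ i, M (f i) (f (i + 1))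

/-- `N_m` as a function of `m : ℕ` (junk value `0` at `m = 0`). -/
def Nfun [CommRing R] [Fintype A] [DecidableEq A] [DecidableEq V]
    (tl hd : A → V) (M : Matrix A A R) (m : ℕ) : R :=
  if h : m = 0 then 0 else
    haveI : NeZero m := ⟨h⟩
    circSum tl hd M m

/-- The generalized weighted zeta function `exp (∑_{m ≥ 1} (N_m / m) t^m)`. -/
def zetaFun [CommRing R] [Algebra ℚ R] (N : ℕ → R) : PowerSeries R :=
  pexp (PowerSeries.mk fun m => if m = 0 then 0 else ((m : ℚ)⁻¹) • N m)


section AuxDeriv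
variable {R : Type*} [CommRing R]

lemma my_derivative_finset_prod {ι : Type*} [DecidableEq ι] (s : Finset ι) (g : ι → PowerSeries R) :
    d⁄dX R (∏ i ∈ s, g i) = ∑ i ∈ s, d⁄dX R (g i) * ∏ j ∈ s.erase i, g j := by
  induction s using Finset.induction with
  | empty => simp
  | @insert a s ha ih =>
    rw [Finset.prod_insert ha, Derivation.leibniz, smul_eq_mul, smul_eq_mul, ih,
      Finset.sum_insert ha, Finset.erase_insert ha, Finset.mul_sum, add_comm]
    congr 1
    · rw [mul_comm]
    · apply Finset.sum_congr rfl
      intro i hi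
      rw [Finset.erase_insert_of_ne (by rintro rfl; exact ha hi), Finset.prod_insert
        (fun h => ha (Finset.mem_of_mem_erase h))]
      ring

lemma my_derivative_det {n : Type*} [Fintype n] [DecidableEq n] (A : Matrix n n (PowerSeries R)) :
    d⁄dX R A.det = ∑ j, (A.updateCol j fun i => d⁄dX R (A i j)).det := by
  simp_rw [Matrix.det_apply]
  rw [map_sum, Finset.sum_comm]
  apply Finset.sum_congr rfl
  intro σ _
  have h1 : ∀ j : n, ∏ i, A.updateCol j (fun i => d⁄dX R (A i j)) (σ i) i
      = d⁄dX R (A (σ j) j) * ∏ i ∈ Finset.univ.erase j, A (σ i) i := by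
    intro j
    rw [← Finset.mul_prod_erase Finset.univ _ (Finset.mem_univ j), Matrix.updateCol_self]
    congr 1
    apply Finset.prod_congr rfl
    intro i hi
    rw [Matrix.updateCol_ne (Finset.ne_of_mem_erase hi)]
  simp_rw [h1, Units.smul_def]
  rw [map_zsmul, my_derivative_finset_prod, ← Finset.smul_sum]

variable [Algebra ℚ R]

lemma my_coeff_pexp (f : PowerSeries R) (n : ℕ) :
    PowerSeries.coeff (R := R) n (pexp f) = ∑ k ∈ Finset.range (n + 1),
      ((Nat.factorial k : ℚ))⁻¹ • (PowerSeries.coeff (R := R) n (f ^ k)) := coeff_mk _ _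

omit [Algebra ℚ R] in
lemma my_coeff_pow_eq_zero {f : PowerSeries R} (hf : constantCoeff (R := R) f = 0)
    {k m : ℕ} (h : m < k) : PowerSeries.coeff (R := R) m (f ^ k) = 0 := by
  have h1 : (X : PowerSeries R) ∣ f := X_dvd_iff.mpr hf
  exact (X_pow_dvd_iff.mp (pow_dvd_pow_of_dvd h1 k)) m h

lemma my_pexp_deriv {f : PowerSeries R} (hf : constantCoeff (R := R) f = 0) :
    d⁄dX R (pexp f) = d⁄dX R f * pexp f := by
  ext n
  rw [coeff_derivative, my_coeff_pexp, Finset.sum_mul]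
  have lhs_eq : ∀ k ∈ Finset.range (n + 2),
      ((Nat.factorial k : ℚ))⁻¹ • (PowerSeries.coeff (R := R) (n+1) (f ^ k)) * ((n : R) + 1)
      = (if k = 0 then 0 else ((Nat.factorial (k-1) : ℚ))⁻¹ •
          PowerSeries.coeff (R := R) n (f ^ (k-1) * d⁄dX R f)) := by
    intro k _
    rcases Nat.eq_zero_or_pos k with rfl | hk
    · simp [PowerSeries.coeff_one]
    · obtain ⟨j, rfl⟩ : ∃ j, k = j + 1 := ⟨k - 1, (Nat.succ_pred_eq_of_pos hk).symm⟩
      rw [if_neg (Nat.succ_ne_zero j), Nat.succ_sub_one]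
      rw [smul_mul_assoc, ← coeff_derivative, Derivation.leibniz_pow, smul_eq_mul,
        Nat.succ_sub_one, map_nsmul, smul_comm, ← Nat.cast_smul_eq_nsmul ℚ, smul_smul]
      congr 1
      rw [Nat.factorial_succ]
      push_cast
      rw [mul_inv, ← mul_assoc, mul_inv_cancel₀ (by positivity), one_mul]
  rw [Finset.sum_congr rfl lhs_eq, Finset.sum_range_succ']
  simp only [Nat.add_sub_cancel, Nat.succ_ne_zero, if_false, reduceIte, add_zero]
  conv_rhs => rw [PowerSeries.coeff_mul]
  have rhs_eq : ∀ p ∈ Finset.HasAntidiagonal.antidiagonal n,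
      PowerSeries.coeff (R := R) p.1 (d⁄dX R f) * PowerSeries.coeff (R := R) p.2 (pexp f)
      = ∑ k ∈ Finset.range (n + 1), ((Nat.factorial k : ℚ))⁻¹ •
          (PowerSeries.coeff (R := R) p.1 (d⁄dX R f) * PowerSeries.coeff (R := R) p.2 (f ^ k)) := by
    intro p hp
    have e1 : PowerSeries.coeff (R := R) p.2 (pexp f) = ∑ k ∈ Finset.range (n + 1),
        ((Nat.factorial k : ℚ))⁻¹ • PowerSeries.coeff (R := R) p.2 (f ^ k) := by
      rw [my_coeff_pexp]
      apply Finset.sum_subset (Finset.range_subset_range.mpr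
        (Nat.succ_le_succ (Finset.HasAntidiagonal.antidiagonal.snd_le hp)))
      intro k hk hk2
      rw [my_coeff_pow_eq_zero hf (by simp only [Finset.mem_range] at hk2 ⊢; omega), smul_zero]
    rw [e1, Finset.mul_sum]
    exact Finset.sum_congr rfl fun k _ => (mul_smul_comm _ _ _)
  rw [Finset.sum_congr rfl rhs_eq, Finset.sum_comm]
  apply Finset.sum_congr rfl
  intro k _
  rw [← Finset.smul_sum, ← PowerSeries.coeff_mul, mul_comm]

lemma my_eq_one_of {h : PowerSeries R} (hd : d⁄dX R h = 0) (hc : constantCoeff (R := R) h = 1) :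
    h = 1 := by
  ext n
  cases n with
  | zero => simpa using hc
  | succ n =>
    have h1 : PowerSeries.coeff (R := R) n (d⁄dX R h) = 0 := by rw [hd]; simp
    rw [coeff_derivative] at h1
    have h2 : PowerSeries.coeff (R := R) (n+1) h * (((n+1 : ℕ) : R)) = 0 := by push_cast; exact h1
    have h3 : PowerSeries.coeff (R := R) (n+1) h
        = ((n + 1 : ℕ) : ℚ)⁻¹ • ((n+1 : ℕ) • PowerSeries.coeff (R := R) (n+1) h) := by
      rw [← Nat.cast_smul_eq_nsmul ℚ, smul_smul, inv_mul_cancel₀ (by positivity), one_smul]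
    rw [PowerSeries.coeff_one, if_neg (Nat.succ_ne_zero n), h3, nsmul_eq_mul, mul_comm, h2,
      smul_zero]

section Matrices
variable {n : Type*} [Fintype n] [DecidableEq n] (M : Matrix n n R)

/-- The geometric series `∑ₘ M^m tᵐ` as a matrix over `R⟦X⟧`. -/
def geomB : Matrix n n (PowerSeries R) :=
  Matrix.of fun i j => PowerSeries.mk fun m => (M ^ m) i j

/-- The series `∑ₘ trace(M^{m+1}) tᵐ`. -/
def traceT : PowerSeries R := PowerSeries.mk fun m => Matrix.trace (M ^ (m + 1))

def matA : Matrix n n (PowerSeries R) :=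
  1 - (PowerSeries.X : PowerSeries R) • M.map (PowerSeries.C (R := R))

omit [Algebra ℚ R] in
lemma hMB : M.map (PowerSeries.C (R := R)) * geomB M
    = Matrix.of fun i j => PowerSeries.mk fun m => (M ^ (m + 1)) i j := by
  ext i j m
  simp only [Matrix.mul_apply, geomB, Matrix.of_apply, Matrix.map_apply, map_sum, coeff_C_mul,
    coeff_mk]
  rw [pow_succ', Matrix.mul_apply]

omit [Algebra ℚ R] in
lemma hBM : geomB M * M.map (PowerSeries.C (R := R))
    = Matrix.of fun i j => PowerSeries.mk fun m => (M ^ (m + 1)) i j := by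
  ext i j m
  simp only [Matrix.mul_apply, geomB, Matrix.of_apply, Matrix.map_apply, map_sum, coeff_mk,
    PowerSeries.coeff_mul_C]
  rw [pow_succ, Matrix.mul_apply]

omit [Algebra ℚ R] in
lemma entries_eq_one (D : Matrix n n (PowerSeries R))
    (hD : D = Matrix.of fun i j => PowerSeries.mk fun m => (M ^ (m + 1)) i j) :
    geomB M - (PowerSeries.X : PowerSeries R) • D = 1 := by
  subst hD
  ext i j m
  simp only [Matrix.sub_apply, Matrix.smul_apply, geomB, Matrix.of_apply, smul_eq_mul, map_sub]
  cases m with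
  | zero =>
    rw [coeff_mk, coeff_zero_eq_constantCoeff, _root_.map_mul, constantCoeff_X, zero_mul,
      sub_zero, pow_zero]
    rw [show ((1 : Matrix n n (PowerSeries R)) i j) = PowerSeries.C (R := R) ((1 : Matrix n n R) i j) by
      rw [Matrix.one_apply, Matrix.one_apply]; split <;> simp]
    rw [constantCoeff_C]
  | succ m =>
    rw [coeff_mk, PowerSeries.coeff_succ_X_mul, coeff_mk, sub_self]
    rw [show ((1 : Matrix n n (PowerSeries R)) i j) = PowerSeries.C (R := R) ((1 : Matrix n n R) i j) by
      rw [Matrix.one_apply, Matrix.one_apply]; split <;> simp]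
    rw [PowerSeries.coeff_C, if_neg (Nat.succ_ne_zero m)]

omit [Algebra ℚ R] in
lemma hAB : matA M * geomB M = 1 := by
  rw [matA, sub_mul, one_mul, Matrix.smul_mul, hMB]
  exact entries_eq_one M _ rfl

omit [Algebra ℚ R] in
lemma hBA : geomB M * matA M = 1 := by
  rw [matA, mul_sub, mul_one, Matrix.mul_smul, hBM]
  exact entries_eq_one M _ rfl

omit [Algebra ℚ R] in
lemma hadj : (matA M).adjugate = (matA M).det • geomB M := by
  calc (matA M).adjugate = (geomB M * matA M) * (matA M).adjugate := by rw [hBA, one_mul]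
  _ = geomB M * (matA M * (matA M).adjugate) := by rw [Matrix.mul_assoc]
  _ = geomB M * ((matA M).det • 1) := by rw [Matrix.mul_adjugate]
  _ = (matA M).det • geomB M := by rw [Matrix.mul_smul, Matrix.mul_one]

omit [Algebra ℚ R] in
lemma htrace : Matrix.trace (Matrix.of fun i j : n =>
    PowerSeries.mk fun m => (M ^ (m + 1)) i j) = traceT M := by
  ext m
  simp only [Matrix.trace, Matrix.diag, Matrix.of_apply, map_sum, coeff_mk, traceT]

omit [Algebra ℚ R] [Fintype n] in
lemma hdA : ∀ i j, d⁄dX R (matA M i j) = - PowerSeries.C (R := R) (M i j) := by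
  intro i j
  rw [matA, Matrix.sub_apply, Matrix.smul_apply, Matrix.map_apply, smul_eq_mul, map_sub]
  rw [show d⁄dX R ((1 : Matrix n n (PowerSeries R)) i j) = 0 by
    rw [Matrix.one_apply]; split <;> simp]
  rw [Derivation.leibniz, smul_eq_mul, smul_eq_mul, derivative_C, mul_zero, derivative_X,
    mul_one, zero_add, zero_sub]

omit [Algebra ℚ R] in
lemma hdetA : d⁄dX R (matA M).det = -(traceT M * (matA M).det) := by
  rw [my_derivative_det]
  have step : ∀ j, ((matA M).updateCol j fun i => d⁄dX R (matA M i j)).det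
      = -(((matA M).adjugate * M.map (PowerSeries.C (R := R))) j j) := by
    intro j
    rw [show (fun i => d⁄dX R (matA M i j)) = -(fun i => PowerSeries.C (R := R) (M i j)) by
      funext i; rw [hdA M i j]; rfl]
    rw [← Matrix.cramer_apply, map_neg, Matrix.cramer_eq_adjugate_mulVec]
    simp [Matrix.mulVec, dotProduct, Matrix.mul_apply, Matrix.map_apply]
  rw [Finset.sum_congr rfl (fun j _ => step j), Finset.sum_neg_distrib]
  rw [show ∑ j, ((matA M).adjugate * M.map (PowerSeries.C (R := R))) j j
      = Matrix.trace ((matA M).adjugate * M.map (PowerSeries.C (R := R))) from rfl]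
  rw [hadj, Matrix.smul_mul, Matrix.trace_smul, hBM, htrace, smul_eq_mul, mul_comm]

end Matrices
end AuxDeriv

/-- for any square matrix `M` over a commutative `ℚ`-algebra `R`,
`exp(∑_{m≥1} (trace(M^m)/m)·t^m) · det(1 − t·M) = 1` in `R[[t]]`. -/
theorem exp_trace_mul_det_eq_one
    {n : Type*} [Fintype n] [DecidableEq n]
    [CommRing R] [Algebra ℚ R] (M : Matrix n n R) :
    pexp (PowerSeries.mk fun m =>
        if m = 0 then 0 else ((m : ℚ)⁻¹) • Matrix.trace (M ^ m)) *
      Matrix.det (1 - (PowerSeries.X : PowerSeries R) • M.map (PowerSeries.C (R := R))) = 1 := by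
  classical
  set l : PowerSeries R := PowerSeries.mk fun m =>
    if m = 0 then 0 else ((m : ℚ)⁻¹) • Matrix.trace (M ^ m) with hl
  have hl0 : constantCoeff (R := R) l = 0 := by
    rw [hl, ← coeff_zero_eq_constantCoeff, coeff_mk, if_pos rfl]
  have hdl : d⁄dX R l = traceT M := by
    ext m
    rw [coeff_derivative, hl, coeff_mk, if_neg (Nat.succ_ne_zero m), traceT, coeff_mk]
    rw [smul_mul_assoc, show ((m : R) + 1) = ((m + 1 : ℕ) : R) by push_cast; ring, mul_comm,
      ← nsmul_eq_mul, ← Nat.cast_smul_eq_nsmul ℚ, smul_smul,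
      inv_mul_cancel₀ (by positivity), one_smul]
  have hF : d⁄dX R (pexp l) = traceT M * pexp l := by
    rw [my_pexp_deriv hl0, hdl]
  have hcF : constantCoeff (R := R) (pexp l) = 1 := by
    rw [← coeff_zero_eq_constantCoeff, my_coeff_pexp]
    simp
  have hcG : constantCoeff (R := R) (matA M).det = 1 := by
    rw [RingHom.map_det, RingHom.mapMatrix_apply]
    rw [show (matA M).map (constantCoeff (R := R)) = 1 by
      ext i j
      rw [Matrix.map_apply, matA, Matrix.sub_apply, Matrix.smul_apply, Matrix.map_apply,
        smul_eq_mul, map_sub, _root_.map_mul, constantCoeff_X, zero_mul, sub_zero]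
      rw [Matrix.one_apply, Matrix.one_apply]; split <;> simp]
    rw [Matrix.det_one]
  have key : pexp l * (matA M).det = 1 := by
    apply my_eq_one_of
    · rw [Derivation.leibniz, smul_eq_mul, smul_eq_mul, hdetA, hF]
      ring
    · rw [_root_.map_mul, hcF, hcG, one_mul]
  exact key
end
end

section
/- Let V, A, 𝔱, 𝔥, inv, R, τ, υ, J, A_Δ, B_Δ be as described. Let K be the A×V matrix over R with K(a,v) = δ_{𝔥a,v} and let L be the V×A matrix over R with L(u,a') = τ(a')·δ_{u,𝔱a'}. Then, regarding K, L, J as matrices over R[[t]], one has L · (1 + t·J)⁻¹ · K = A_Δ − t·B_Δ as V×V matrices over R[[t]]. -/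
open PowerSeries Matrix Finset

noncomputable section

variable {V A R : Type*}

lemma cFac_isUnit [CommRing R] [DecidableEq V] (tl hd : A → V) (inv : A → Option A)
    (υ : A → R) (a : A) : IsUnit (cFac tl hd inv υ a) := by
  rw [PowerSeries.isUnit_iff_constantCoeff]
  unfold cFac
  split_ifs with h
  · simp
  · cases inv a <;> simp

/-- Explicit inverse of `1 + X • J`. -/
def Nmat [CommRing R] [DecidableEq V] [DecidableEq A] (tl hd : A → V)
    (inv : A → Option A) (υ : A → R) : Matrix A A (PowerSeries R) :=
  fun a a' =>
    (if a' = a then Ring.inverse (cFac tl hd inv υ a) else 0) -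
    (if inv a = some a' ∧ a' ≠ a then
        PowerSeries.X * PowerSeries.C (R := R) (υ a') * Ring.inverse (cFac tl hd inv υ a)
      else 0)

lemma Nmat_right_inv [Fintype A] [CommRing R] [DecidableEq V] [DecidableEq A]
    (tl hd : A → V) (inv : A → Option A)
    (hsym : ∀ a b, inv a = some b → inv b = some a ∧ tl b = hd a ∧ hd b = tl a)
    (hloop : ∀ a, tl a = hd a → inv a = some a)
    (hnonloop : ∀ a b, tl a ≠ hd a → inv a = some b → b ≠ a)
    (υ : A → R) :
    (1 + (PowerSeries.X : PowerSeries R) • (invJ inv υ).map (PowerSeries.C (R := R))) *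
      Nmat tl hd inv υ = 1 := by
  rw [add_mul, one_mul, Matrix.smul_mul]
  refine Matrix.ext fun a a'' => ?_
  rw [Matrix.add_apply, Matrix.smul_apply, Matrix.mul_apply, smul_eq_mul]
  have hsum : ∀ a', (invJ inv υ).map (PowerSeries.C (R := R)) a a' * Nmat tl hd inv υ a' a''
      = (if inv a = some a' then PowerSeries.C (R := R) (υ a') * Nmat tl hd inv υ a' a'' else 0) := by
    intro a'
    simp only [Matrix.map_apply, invJ]
    split_ifs <;> simp
  rw [Finset.sum_congr rfl fun a' _ => hsum a']
  cases hinv : inv a with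
  | none =>
    have hnl : tl a ≠ hd a := fun hl => by simp [hloop a hl] at hinv
    have hc : cFac tl hd inv υ a = 1 := by
      unfold cFac; rw [if_neg hnl]; simp only [hinv]
    simp [Nmat, hinv, hc, Matrix.one_apply, eq_comm]
  | some b =>
    rw [Finset.sum_eq_single b (fun a' _ hne => by
        rw [if_neg (by simpa using Ne.symm hne)])
      (fun h => absurd (Finset.mem_univ b) h), if_pos rfl]
    by_cases hl : tl a = hd a
    · -- loop case: b = a
      have hb : b = a := by
        have := hloop a hl; rw [hinv] at this; exact Option.some.inj this
      have hc : cFac tl hd inv υ a = 1 + PowerSeries.C (R := R) (υ a) * PowerSeries.X := by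
        unfold cFac; rw [if_pos hl]
      have hcc := Ring.mul_inverse_cancel _ (cFac_isUnit tl hd inv υ a)
      rw [hc] at hcc
      simp only [Nmat, hinv, Matrix.one_apply, hb]
      by_cases he : a'' = a
      · rw [if_pos he, if_pos he.symm, if_neg (fun h : _ ∧ a'' ≠ a => h.2 he), hc]
        linear_combination hcc
      · rw [if_neg he, if_neg (fun h : _ ∧ _ => he (Option.some.inj h.1).symm),
          if_neg (fun h => he h.symm)]
        ring
    · -- non-loop case
      have hba : b ≠ a := hnonloop a b hl hinv
      obtain ⟨hinvb, htb, hhb⟩ := hsym a b hinv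
      have hblnl : tl b ≠ hd b := by rw [htb, hhb]; exact fun h => hl h.symm
      have hca : cFac tl hd inv υ a = 1 - PowerSeries.C (R := R) (υ a * υ b) * PowerSeries.X ^ 2 := by
        unfold cFac; rw [if_neg hl]; simp only [hinv]
      have hcb : cFac tl hd inv υ b = cFac tl hd inv υ a := by
        unfold cFac; rw [if_neg hl, if_neg hblnl]
        simp only [hinv, hinvb, mul_comm (υ b) (υ a)]
      have hcc := Ring.mul_inverse_cancel _ (cFac_isUnit tl hd inv υ a)
      rw [hca] at hcc
      simp only [Nmat, hinv, hinvb, hcb, hca, Matrix.one_apply]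
      by_cases he : a'' = a
      · rw [he]
        rw [if_pos rfl, if_pos rfl, if_neg (fun h : _ ∧ a ≠ a => h.2 rfl),
          if_neg (fun h : a = b => hba h.symm),
          if_pos (⟨rfl, fun h => hba h.symm⟩ : some a = some a ∧ a ≠ b)]
        simp only [_root_.map_mul] at hcc ⊢
        linear_combination hcc
      · rw [if_neg he, if_neg (Ne.symm he)]
        by_cases he' : a'' = b
        · rw [he']
          rw [if_pos (⟨rfl, hba⟩ : some b = some b ∧ b ≠ a), if_pos rfl,
            if_neg (fun h : _ ∧ b ≠ b => h.2 rfl)]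
          ring
        · rw [if_neg (fun h : some b = some a'' ∧ a'' ≠ a =>
              he' (Option.some.inj h.1).symm), if_neg he',
            if_neg (fun h : some a = some a'' ∧ a'' ≠ b =>
              he (Option.some.inj h.1).symm)]
          ring

set_option maxHeartbeats 1000000 in
/-- `L · (1 + t·J)⁻¹ · K = A_Δ − t·B_Δ` as `V × V` matrices over `R[[t]]`,
where `K(a,v) = δ_{𝔥a,v}` and `L(u,a') = τ(a')·δ_{u,𝔱a'}`. -/
theorem L_inv_K_eq_adj_sub_back
    [Fintype V] [Fintype A] [DecidableEq V] [DecidableEq A]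
    [CommRing R] [Algebra ℚ R]
    (tl hd : A → V) (inv : A → Option A)
    (hsym : ∀ a b, inv a = some b → inv b = some a ∧ tl b = hd a ∧ hd b = tl a)
    (hloop : ∀ a, tl a = hd a → inv a = some a)
    (hnonloop : ∀ a b, tl a ≠ hd a → inv a = some b → b ≠ a)
    (τ υ : A → R)
    (K : Matrix A V R) (hK : ∀ a v, K a v = if hd a = v then 1 else 0)
    (L : Matrix V A R) (hL : ∀ u a', L u a' = τ a' * (if u = tl a' then 1 else 0)) :
    L.map (PowerSeries.C (R := R)) *
        (1 + (PowerSeries.X : PowerSeries R) • (invJ inv υ).map (PowerSeries.C (R := R)))⁻¹ *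
        K.map (PowerSeries.C (R := R)) =
      adjMat tl hd inv τ υ - (PowerSeries.X : PowerSeries R) • backMat tl hd inv τ υ := by
  rw [Matrix.inv_eq_right_inv (Nmat_right_inv tl hd inv hsym hloop hnonloop υ),
    Matrix.mul_assoc]
  refine Matrix.ext fun u v => ?_
  rw [Matrix.mul_apply, Matrix.sub_apply, Matrix.smul_apply, smul_eq_mul]
  have hback : (PowerSeries.X : PowerSeries R) * backMat tl hd inv τ υ u v =
      ∑ a : A, (if u = v then PowerSeries.X *
        (if tl a = u ∧ tl a ≠ hd a then
          (match inv a with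
           | some b => PowerSeries.C (R := R) (τ a * υ b) * Ring.inverse (cFac tl hd inv υ a)
           | none => 0)
         else 0) else 0) := by
    unfold backMat
    split_ifs with h <;> simp [Finset.mul_sum]
  simp only [hback, adjMat]
  rw [← Finset.sum_sub_distrib]
  refine Finset.sum_congr rfl fun a _ => ?_
  rw [Matrix.map_apply, hL, Matrix.mul_apply]
  simp only [Nmat, Matrix.map_apply, hK, sub_mul, apply_ite (PowerSeries.C (R := R)), _root_.map_one,
    map_zero, _root_.map_mul]
  rw [Finset.sum_sub_distrib,
    Finset.sum_eq_single a (fun a' _ hne => by rw [if_neg hne, zero_mul])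
      (fun h => absurd (Finset.mem_univ a) h), if_pos rfl]
  cases hinv : inv a with
  | none =>
    rw [Finset.sum_eq_zero (fun a' _ => by
      rw [if_neg (fun h : (none : Option A) = some a' ∧ _ => by simp at h), zero_mul])]
    have hnl : tl a ≠ hd a := fun hl => by simp [hloop a hl] at hinv
    by_cases hu : u = tl a
    · subst hu
      simp only [eq_self_iff_true, if_true, true_and, mul_one, mul_zero, sub_zero]
      split_ifs <;> ring
    · rw [if_neg hu, if_neg (fun h : tl a = u ∧ _ => hu h.1.symm),
        if_neg (fun h : tl a = u ∧ _ => hu h.1.symm)]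
      split_ifs <;> ring
  | some b =>
    rw [Finset.sum_eq_single b (fun a' _ hne => by
        rw [if_neg (fun h : _ ∧ _ => hne (Option.some.inj h.1).symm), zero_mul])
      (fun h => absurd (Finset.mem_univ b) h)]
    by_cases hl : tl a = hd a
    · have hb : b = a := by
        have := hloop a hl; rw [hinv] at this; exact Option.some.inj this
      rw [if_neg (fun h : _ ∧ b ≠ a => h.2 hb), zero_mul, sub_zero]
      by_cases hu : u = tl a
      · subst hu
        simp only [eq_self_iff_true, if_true, true_and, mul_one]
        rw [if_neg (fun h : tl a ≠ hd a => h hl), mul_zero]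
        split_ifs <;> ring
      · rw [if_neg hu, if_neg (fun h : tl a = u ∧ _ => hu h.1.symm),
          if_neg (fun h : tl a = u ∧ _ => hu h.1.symm)]
        split_ifs <;> ring
    · have hba : b ≠ a := hnonloop a b hl hinv
      obtain ⟨hinvb, htb, hhb⟩ := hsym a b hinv
      rw [if_pos ((⟨rfl, hba⟩ : some b = some b ∧ b ≠ a)), hhb]
      by_cases hu : u = tl a
      · subst hu
        simp only [eq_self_iff_true, if_true, true_and, mul_one, ne_eq, hl,
          not_false_eq_true]
        split_ifs <;> ring
      · rw [if_neg hu, if_neg (fun h : tl a = u ∧ _ => hu h.1.symm),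
          if_neg (fun h : tl a = u ∧ _ => hu h.1.symm)]
        split_ifs <;> ring
end
end

section
/- Let V, A, 𝔱, 𝔥, inv, R, τ, υ, M, J be as described, and let K be the A×V matrix over R with K(a,v) = δ_{𝔥a,v} and L the V×A matrix over R with L(u,a') = τ(a')·δ_{u,𝔱a'}. Then M = K·L − J, and in R[[t]] one has det(1 − t·M) = det(1 + t·J) · det(1_V − t·L·(1 + t·J)⁻¹·K), where all matrices are regarded over R[[t]] via the constant-coefficient embedding. -/
open PowerSeries Matrix Finset

noncomputable section

variable {V A R : Type*}

/-- `M = K·L − J`, and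
`det(1 − t·M) = det(1 + t·J) · det(1_V − t·L·(1 + t·J)⁻¹·K)` in `R[[t]]`. -/
theorem det_factorization
    [Fintype V] [Fintype A] [DecidableEq V] [DecidableEq A]
    [CommRing R] [Algebra ℚ R]
    (tl hd : A → V) (inv : A → Option A)
    (hsym : ∀ a b, inv a = some b → inv b = some a ∧ tl b = hd a ∧ hd b = tl a)
    (hloop : ∀ a, tl a = hd a → inv a = some a)
    (hnonloop : ∀ a b, tl a ≠ hd a → inv a = some b → b ≠ a)
    (τ υ : A → R)
    (K : Matrix A V R) (hK : ∀ a v, K a v = if hd a = v then 1 else 0)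
    (L : Matrix V A R) (hL : ∀ u a', L u a' = τ a' * (if u = tl a' then 1 else 0)) :
    genWeight tl hd inv τ υ = K * L - invJ inv υ ∧
    Matrix.det (1 - (PowerSeries.X : PowerSeries R) •
        (genWeight tl hd inv τ υ).map (PowerSeries.C (R := R))) =
      Matrix.det (1 + (PowerSeries.X : PowerSeries R) •
        (invJ inv υ).map (PowerSeries.C (R := R))) *
      Matrix.det ((1 : Matrix V V (PowerSeries R)) -
        (PowerSeries.X : PowerSeries R) • (L.map (PowerSeries.C (R := R)) *
          (1 + (PowerSeries.X : PowerSeries R) • (invJ inv υ).map (PowerSeries.C (R := R)))⁻¹ *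
          K.map (PowerSeries.C (R := R)))) := by
  have hfirst : genWeight tl hd inv τ υ = K * L - invJ inv υ := by
    ext a a'
    simp only [genWeight, invJ, Matrix.sub_apply, Matrix.mul_apply, hK, hL]
    rw [Finset.sum_eq_single (hd a)]
    · simp [eq_comm]
    · intro v _ hv; rw [if_neg (Ne.symm hv), zero_mul]
    · simp
  refine ⟨hfirst, ?_⟩
  set K' := K.map (PowerSeries.C (R := R)) with hK'
  set L' := L.map (PowerSeries.C (R := R)) with hL'
  set J' := (invJ inv υ).map (PowerSeries.C (R := R)) with hJ'
  set P := (1 : Matrix A A (PowerSeries R)) + (PowerSeries.X : PowerSeries R) • J' with hPdef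
  have hM' : (genWeight tl hd inv τ υ).map (PowerSeries.C (R := R)) = K' * L' - J' := by
    rw [hfirst]
    rw [Matrix.map_sub _ (by simp)]
    congr 1
    exact Matrix.map_mul (f := (PowerSeries.C (R := R))) (L := K) (M := L)
  have hPconst : P.map (PowerSeries.constantCoeff (R := R)) = 1 := by
    ext a b
    simp [hPdef, Matrix.map_apply, Matrix.add_apply, Matrix.smul_apply, Matrix.one_apply,
      smul_eq_mul, hJ']
  have hPunit : IsUnit P.det := by
    rw [PowerSeries.isUnit_iff_constantCoeff]
    have : (PowerSeries.constantCoeff (R := R)) P.det = (P.map (PowerSeries.constantCoeff (R := R))).det :=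
      RingHom.map_det _ _
    rw [this, hPconst, Matrix.det_one]
    exact isUnit_one
  have hPP : P * P⁻¹ = 1 := Matrix.mul_nonsing_inv P hPunit
  have hfac : (1 : Matrix A A (PowerSeries R)) -
      (PowerSeries.X : PowerSeries R) • (genWeight tl hd inv τ υ).map (PowerSeries.C (R := R)) =
      P * (1 - (PowerSeries.X : PowerSeries R) • (P⁻¹ * (K' * L'))) := by
    rw [Matrix.mul_sub, Matrix.mul_one, Matrix.mul_smul, ← Matrix.mul_assoc, hPP,
      Matrix.one_mul, hM', smul_sub, hPdef]
    abel
  rw [hfac, Matrix.det_mul]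
  congr 1
  have : (1 : Matrix A A (PowerSeries R)) -
      (PowerSeries.X : PowerSeries R) • (P⁻¹ * (K' * L')) =
      1 - (P⁻¹ * K') * ((PowerSeries.X : PowerSeries R) • L') := by
    rw [Matrix.mul_smul, Matrix.mul_assoc]
  rw [this, Matrix.det_one_sub_mul_comm, Matrix.smul_mul, Matrix.mul_assoc]
end
end
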